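/- Key estimate at a negative minimum: Let D ⊂ ℝ^n be an open set and let w ∈ L_{2s} satisfy w(x) ≥ 0 for all x ∈ ℝ^n \ D. Suppose w attains a global minimum at a point x₀ ∈ D with w(x₀) < 0 and that (-Δ)^s w(x₀) exists. Then (-Δ)^s w(x₀) ≤ C_{n,s} · w(x₀) · ∫_{ℝ^n \ D} |x₀ − y|^{−(n+2s)} dy. -/
import Mathlib


open MeasureTheory Filter Metric Set

noncomputable section

/-- Points of ℝⁿ with the Euclidean norm. -/
abbrev Pt (n : ℕ) := EuclideanSpace ℝ (Fin n)

/-- The space `L_{2s}`: locally integrable functions `u` with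
`∫ |u(x)|/(1+|x|^{n+2s}) dx < ∞`. -/
def MemL2s (n : ℕ) (s : ℝ) (u : Pt n → ℝ) : Prop :=
  LocallyIntegrable u volume ∧
    Integrable (fun x : Pt n => |u x| / (1 + ‖x‖ ^ ((n : ℝ) + 2 * s))) volume

/-- `u` is locally `C^{1,1}` on the open set `D`. -/
def C11loc (n : ℕ) (u : Pt n → ℝ) (D : Set (Pt n)) : Prop :=
  ∀ x ∈ D, ∃ ε > 0, ball x ε ⊆ D ∧ DifferentiableOn ℝ u (ball x ε) ∧
    ∃ K : NNReal, LipschitzOnWith K (fun y => fderivWithin ℝ u (ball x ε) y) (ball x ε)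

/-- `(-Δ)^s u (x) = L`, with the principal value defined as the limit, as `ε → 0⁺`, of
`C_{n,s} ∫_{ℝⁿ \ B_ε(x)} (u(x) - u(y))/|x-y|^{n+2s} dy`. -/
def HasFracLap (n : ℕ) (s Cns : ℝ) (u : Pt n → ℝ) (x : Pt n) (L : ℝ) : Prop :=
  Tendsto (fun ε : ℝ =>
      Cns * ∫ y in {y : Pt n | ε ≤ dist x y}, (u x - u y) / dist x y ^ ((n : ℝ) + 2 * s))
    (nhdsWithin 0 (Set.Ioi 0)) (nhds L)

/-- The index of the last coordinate (`x_n`). -/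
def lastIdx (n : ℕ) (hn : 0 < n) : Fin n := ⟨n - 1, Nat.sub_lt hn Nat.one_pos⟩

/-- The unit vector `e_n` in the `x_n` direction. -/
def eN (n : ℕ) (hn : 0 < n) : Pt n := EuclideanSpace.single (lastIdx n hn) 1


/-- Integrability of `1/dist^p` away from the singularity, for `p > n`. -/
lemma auxIntegrableOn_inv_dist_rpow (n : ℕ) (p : ℝ) (hpn : (n : ℝ) < p)
    (x0 : Pt n) {ε : ℝ} (hε : 0 < ε) :
    IntegrableOn (fun y : Pt n => 1 / dist x0 y ^ p) {y : Pt n | ε ≤ dist x0 y} volume := by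
  have hp0 : 0 < p := lt_of_le_of_lt (Nat.cast_nonneg n) hpn
  have hmeas : MeasurableSet {y : Pt n | ε ≤ dist x0 y} :=
    (isClosed_le continuous_const (continuous_const.dist continuous_id)).measurableSet
  have hbase : Integrable (fun y : Pt n => (1 + ε⁻¹) ^ p * (1 + ‖y - x0‖) ^ (-p)) volume := by
    have h1 : Integrable (fun y : Pt n => (1 + ‖y‖) ^ (-p)) (volume : Measure (Pt n)) :=
      integrable_one_add_norm (by simpa [finrank_euclideanSpace_fin] using hpn)
    exact (h1.comp_sub_right x0).const_mul _
  have hcont : Continuous fun y : Pt n => dist x0 y ^ p :=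
    (continuous_const.dist continuous_id).rpow_const (fun y => Or.inr hp0.le)
  refine (hbase.integrableOn).mono' ?_ ?_
  · have : AEStronglyMeasurable (fun y : Pt n => (dist x0 y ^ p)⁻¹) volume :=
      (hcont.measurable.inv).aestronglyMeasurable
    simpa [one_div] using this.restrict
  · rw [ae_restrict_iff' hmeas]
    refine Eventually.of_forall fun y hy => ?_
    have hy' : ε ≤ dist x0 y := hy
    have hd : 0 < dist x0 y := lt_of_lt_of_le hε hy'
    have hnorm : ‖y - x0‖ = dist x0 y := by
      rw [← dist_eq_norm, dist_comm]
    rw [hnorm]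
    have h1 : (0:ℝ) < dist x0 y ^ p := Real.rpow_pos_of_pos hd p
    have h2 : (0:ℝ) < (1 + dist x0 y) ^ p :=
      Real.rpow_pos_of_pos (by linarith) p
    rw [Real.norm_of_nonneg (by positivity), Real.rpow_neg (by positivity),
      ← div_eq_mul_inv, div_le_div_iff₀ h1 h2, one_mul]
    have hle : 1 + dist x0 y ≤ (1 + ε⁻¹) * dist x0 y := by
      have : (1:ℝ) ≤ dist x0 y / ε := (one_le_div hε).mpr hy'
      have h3 : (1:ℝ) ≤ ε⁻¹ * dist x0 y := by
        rwa [div_eq_inv_mul] at this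
      nlinarith
    calc (1 + dist x0 y) ^ p ≤ ((1 + ε⁻¹) * dist x0 y) ^ p :=
          Real.rpow_le_rpow (by positivity) hle hp0.le
      _ = (1 + ε⁻¹) ^ p * dist x0 y ^ p :=
          Real.mul_rpow (by positivity) hd.le

/-- Integrability of `w y / dist^p` away from the singularity, for `w ∈ L_{2s}`. -/
lemma auxIntegrableOn_w (n : ℕ) (s : ℝ) (hs0 : 0 < s) (w : Pt n → ℝ)
    (hwL : MemL2s n s w) (x0 : Pt n) {ε : ℝ} (hε : 0 < ε) :
    IntegrableOn (fun y : Pt n => w y / dist x0 y ^ ((n : ℝ) + 2 * s))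
      {y : Pt n | ε ≤ dist x0 y} volume := by
  set p : ℝ := (n : ℝ) + 2 * s with hp_def
  have hp0 : 0 < p := by positivity
  have hmeas : MeasurableSet {y : Pt n | ε ≤ dist x0 y} :=
    (isClosed_le continuous_const (continuous_const.dist continuous_id)).measurableSet
  set M : ℝ := ε⁻¹ ^ p + (1 + ‖x0‖ * ε⁻¹) ^ p with hM_def
  have hcont : Continuous fun y : Pt n => dist x0 y ^ p :=
    (continuous_const.dist continuous_id).rpow_const (fun y => Or.inr hp0.le)
  refine ((hwL.2.const_mul M).integrableOn).mono' ?_ ?_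
  · have : AEStronglyMeasurable
        (fun y : Pt n => w y * (dist x0 y ^ p)⁻¹) volume :=
      hwL.1.aestronglyMeasurable.mul (hcont.measurable.inv).aestronglyMeasurable
    simpa [div_eq_mul_inv] using this.restrict
  · rw [ae_restrict_iff' hmeas]
    refine Eventually.of_forall fun y hy => ?_
    have hy' : ε ≤ dist x0 y := hy
    have hd : 0 < dist x0 y := lt_of_lt_of_le hε hy'
    have h1 : (0:ℝ) < dist x0 y ^ p := Real.rpow_pos_of_pos hd p
    have h2 : (0:ℝ) < 1 + ‖y‖ ^ p := by positivity
    have key : 1 + ‖y‖ ^ p ≤ M * dist x0 y ^ p := by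
      have hA : (1:ℝ) ≤ ε⁻¹ ^ p * dist x0 y ^ p := by
        rw [← Real.mul_rpow (by positivity) dist_nonneg]
        have : (1:ℝ) ≤ ε⁻¹ * dist x0 y := by
          have := (one_le_div hε).mpr hy'
          rwa [div_eq_inv_mul] at this
        calc (1:ℝ) = 1 ^ p := (Real.one_rpow p).symm
          _ ≤ (ε⁻¹ * dist x0 y) ^ p := Real.rpow_le_rpow zero_le_one this hp0.le
      have hB : ‖y‖ ^ p ≤ (1 + ‖x0‖ * ε⁻¹) ^ p * dist x0 y ^ p := by
        rw [← Real.mul_rpow (by positivity) dist_nonneg]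
        refine Real.rpow_le_rpow (norm_nonneg y) ?_ hp0.le
        have h3 : ‖y‖ ≤ ‖x0‖ + dist x0 y := by
          have : dist y 0 ≤ dist y x0 + dist x0 0 := dist_triangle _ _ _
          simpa [dist_comm x0 y, dist_eq_norm, add_comm] using this
        have h4 : ‖x0‖ ≤ ‖x0‖ * ε⁻¹ * dist x0 y := by
          rcases le_or_gt ‖x0‖ 0 with h | h
          · have hx0 : ‖x0‖ = 0 := le_antisymm h (norm_nonneg _)
            simp [hx0]
          · have : (1:ℝ) ≤ ε⁻¹ * dist x0 y := by
              have := (one_le_div hε).mpr hy'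
              rwa [div_eq_inv_mul] at this
            nlinarith
        nlinarith
      have expand : M * dist x0 y ^ p
          = ε⁻¹ ^ p * dist x0 y ^ p + (1 + ‖x0‖ * ε⁻¹) ^ p * dist x0 y ^ p := by
        rw [hM_def]; ring
      rw [expand]
      linarith
    have hle : |w y| / dist x0 y ^ p ≤ M * (|w y| / (1 + ‖y‖ ^ p)) := by
      rw [mul_div_assoc' M, div_le_div_iff₀ h1 h2]
      calc |w y| * (1 + ‖y‖ ^ p) ≤ |w y| * (M * dist x0 y ^ p) :=
            mul_le_mul_of_nonneg_left key (abs_nonneg _)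
        _ = M * |w y| * dist x0 y ^ p := by ring
    calc ‖w y / dist x0 y ^ p‖ = |w y| / dist x0 y ^ p := by
          rw [Real.norm_eq_abs, abs_div, abs_of_nonneg h1.le]
      _ ≤ M * (|w y| / (1 + ‖y‖ ^ p)) := hle

/-- Key estimate on the fractional Laplacian at a negative global minimum attained inside `D`,
for a function that is nonnegative outside `D`. -/
theorem fracLap_estimate_at_negative_min
    (n : ℕ) (hn : 0 < n) (s : ℝ) (hs : s ∈ Set.Ioo (0 : ℝ) 1) (Cns : ℝ) (hCns : 0 < Cns)
    (D : Set (Pt n)) (hDopen : IsOpen D)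
    (w : Pt n → ℝ) (hwL : MemL2s n s w)
    (hext : ∀ x : Pt n, x ∉ D → 0 ≤ w x)
    (x0 : Pt n) (hx0 : x0 ∈ D) (hneg : w x0 < 0)
    (hmin : ∀ y : Pt n, w x0 ≤ w y)
    (L : ℝ) (hL : HasFracLap n s Cns w x0 L) :
    L ≤ Cns * w x0 * ∫ y in Dᶜ, 1 / dist x0 y ^ ((n : ℝ) + 2 * s) := by
  obtain ⟨hs0, hs1⟩ := hs
  set p : ℝ := (n : ℝ) + 2 * s with hp_def
  have hp0 : 0 < p := by positivity
  have hpn : (n : ℝ) < p := by simp only [hp_def]; linarith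
  obtain ⟨r, hr0, hrball⟩ := Metric.isOpen_iff.mp hDopen x0 hx0
  have hDc : ∀ y ∈ Dᶜ, r ≤ dist x0 y := by
    intro y hy
    by_contra h
    push_neg at h
    exact hy (hrball (by simpa [Metric.mem_ball, dist_comm] using h))
  have hDcmeas : MeasurableSet (Dᶜ : Set (Pt n)) := hDopen.isClosed_compl.measurableSet
  -- the target constant
  set RHS : ℝ := Cns * w x0 * ∫ y in Dᶜ, 1 / dist x0 y ^ p with hRHS_def
  refine le_of_tendsto hL ?_
  have hmem : Set.Ioo (0:ℝ) r ∈ nhdsWithin (0:ℝ) (Set.Ioi 0) :=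
    Ioo_mem_nhdsGT_of_mem ⟨le_refl 0, hr0⟩
  filter_upwards [hmem] with ε hε
  obtain ⟨hε0, hεr⟩ := hε
  set S : Set (Pt n) := {y : Pt n | ε ≤ dist x0 y} with hS_def
  have hSmeas : MeasurableSet S :=
    (isClosed_le continuous_const (continuous_const.dist continuous_id)).measurableSet
  have hsub : (Dᶜ : Set (Pt n)) ⊆ S := fun y hy =>
    le_trans hεr.le (hDc y hy)
  have hsubr : (Dᶜ : Set (Pt n)) ⊆ {y : Pt n | r ≤ dist x0 y} := fun y hy => hDc y hy
  -- integrability of the full integrand on S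
  have hI1 : IntegrableOn (fun y : Pt n => 1 / dist x0 y ^ p) S volume :=
    auxIntegrableOn_inv_dist_rpow n p hpn x0 hε0
  have hI2 : IntegrableOn (fun y : Pt n => w y / dist x0 y ^ p) S volume :=
    auxIntegrableOn_w n s hs0 w hwL x0 hε0
  have hg_eq : (fun y : Pt n => (w x0 - w y) / dist x0 y ^ p)
      = fun y : Pt n => w x0 * (1 / dist x0 y ^ p) - w y / dist x0 y ^ p := by
    funext y
    rw [sub_div, mul_one_div]
  have hIg : IntegrableOn (fun y : Pt n => (w x0 - w y) / dist x0 y ^ p) S volume := by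
    rw [hg_eq]
    exact (hI1.const_mul (w x0)).sub hI2
  have hg_nonpos : ∀ y : Pt n, (w x0 - w y) / dist x0 y ^ p ≤ 0 := fun y =>
    div_nonpos_of_nonpos_of_nonneg (by linarith [hmin y]) (Real.rpow_nonneg dist_nonneg p)
  -- step 1: shrink the domain of integration to Dᶜ
  have step1 : ∫ y in S, (w x0 - w y) / dist x0 y ^ p
      ≤ ∫ y in Dᶜ, (w x0 - w y) / dist x0 y ^ p := by
    have hneg' := setIntegral_mono_set (f := fun y : Pt n => -((w x0 - w y) / dist x0 y ^ p))
      (s := (Dᶜ : Set (Pt n))) (t := S) hIg.neg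
      (Eventually.of_forall fun y => neg_nonneg.mpr (hg_nonpos y))
      (HasSubset.Subset.eventuallyLE hsub)
    rw [integral_neg, integral_neg, neg_le_neg_iff] at hneg'
    exact hneg'
  -- step 2: pointwise bound on Dᶜ
  have hIgDc : IntegrableOn (fun y : Pt n => (w x0 - w y) / dist x0 y ^ p) Dᶜ volume :=
    hIg.mono_set hsub
  have hI1Dc : IntegrableOn (fun y : Pt n => w x0 * (1 / dist x0 y ^ p)) Dᶜ volume :=
    ((auxIntegrableOn_inv_dist_rpow n p hpn x0 hr0).mono_set hsubr).const_mul (w x0)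
  have step2 : ∫ y in Dᶜ, (w x0 - w y) / dist x0 y ^ p
      ≤ ∫ y in Dᶜ, w x0 * (1 / dist x0 y ^ p) := by
    refine setIntegral_mono_on hIgDc hI1Dc hDcmeas fun y hy => ?_
    have hd : 0 < dist x0 y := lt_of_lt_of_le hr0 (hDc y hy)
    have hdp : (0:ℝ) < dist x0 y ^ p := Real.rpow_pos_of_pos hd p
    rw [mul_one_div, div_le_div_iff_of_pos_right hdp]
    linarith [hext y hy]
  have step3 : ∫ y in Dᶜ, w x0 * (1 / dist x0 y ^ p)
      = w x0 * ∫ y in Dᶜ, 1 / dist x0 y ^ p := integral_const_mul _ _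
  have main : ∫ y in S, (w x0 - w y) / dist x0 y ^ p
      ≤ w x0 * ∫ y in Dᶜ, 1 / dist x0 y ^ p := by
    rw [← step3]
    exact le_trans step1 step2
  calc Cns * ∫ y in S, (w x0 - w y) / dist x0 y ^ p
      ≤ Cns * (w x0 * ∫ y in Dᶜ, 1 / dist x0 y ^ p) :=
        mul_le_mul_of_nonneg_left main hCns.le
    _ = RHS := by rw [hRHS_def, mul_assoc]
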